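/- arXiv:1502.05834 — 4 statements merged into one kernel-verified Lean document; each statement's English description precedes it below -/
import Mathlib

section
/- Let F0 be a transitive weakly connected unimodal frame (a frame for K4.3) that contains an (ω+1,>)-type chain, and let F1 be a countably infinite one-step rooted frame. Then the formula φ∞• is satisfiable in the product 2-frame F0 × F1. -/
set_option linter.unusedVariables false

/-! ### Unimodal syntax -/

/-- Unimodal formulas: propositional variables, falsum, implication and one box.
Other Booleans and the diamond are defined from these. -/
inductive UForm : Type
  | var : ℕ → UForm
  | bot : UForm
  | imp : UForm → UForm → UForm
  | box : UForm → UForm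

namespace UForm
def neg (φ : UForm) : UForm := imp φ bot
def dia (φ : UForm) : UForm := neg (box (neg φ))
end UForm

/-! ### Bimodal syntax -/

/-- Bimodal formulas: propositional variables, falsum, implication and boxes `□0`, `□1`. -/
inductive BForm : Type
  | var : ℕ → BForm
  | bot : BForm
  | imp : BForm → BForm → BForm
  | box : Fin 2 → BForm → BForm

namespace BForm
def neg (φ : BForm) : BForm := imp φ bot
def top : BForm := neg bot
def and (φ ψ : BForm) : BForm := neg (imp φ (neg ψ))
def or (φ ψ : BForm) : BForm := imp (neg φ) ψ
def dia (i : Fin 2) (φ : BForm) : BForm := neg (box i (neg φ))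

/-- Substitution of formulas for propositional variables. -/
def subst (s : ℕ → BForm) : BForm → BForm
  | var n => s n
  | bot => bot
  | imp φ ψ => imp (subst s φ) (subst s ψ)
  | box i φ => box i (subst s φ)
end BForm

/-- Embedding of unimodal formulas into bimodal ones, reading the unimodal box as `□i`. -/
def UForm.embed (i : Fin 2) : UForm → BForm
  | var n => .var n
  | bot => .bot
  | imp φ ψ => .imp (embed i φ) (embed i ψ)
  | box φ => .box i (embed i φ)

/-! ### Frames and semantics -/

/-- A unimodal Kripke frame: a nonempty set with a binary relation. -/
structure Frame1 : Type 1 where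
  W : Type
  ne : Nonempty W
  R : W → W → Prop

/-- Truth of a unimodal formula at a point of a model based on a unimodal frame. -/
def UTruth (F : Frame1) (V : ℕ → F.W → Prop) : F.W → UForm → Prop
  | w, .var n => V n w
  | _, .bot => False
  | w, .imp φ ψ => UTruth F V w φ → UTruth F V w ψ
  | w, .box φ => ∀ v, F.R w v → UTruth F V v φ

/-- Validity of a unimodal formula in a unimodal frame. -/
def UValid (F : Frame1) (φ : UForm) : Prop := ∀ V w, UTruth F V w φ

/-- `F` is a frame for the set `L` of unimodal formulas. -/
def UFrameFor (F : Frame1) (L : Set UForm) : Prop := ∀ φ ∈ L, UValid F φ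

/-- The unimodal logic determined by a class of unimodal frames. -/
def ULog (C : Set Frame1) : Set UForm := { φ | ∀ F ∈ C, UValid F φ }

/-- The unimodal logic of a single unimodal frame. -/
def LogOf (F : Frame1) : Set UForm := { φ | UValid F φ }

/-- A 2-frame: a nonempty set with two binary relations `R 0` and `R 1`. -/
structure Frame2 : Type 1 where
  W : Type
  ne : Nonempty W
  R : Fin 2 → W → W → Prop

/-- Truth of a bimodal formula at a point of a model based on a 2-frame. -/
def BTruth (F : Frame2) (V : ℕ → F.W → Prop) : F.W → BForm → Prop
  | w, .var n => V n w
  | _, .bot => False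
  | w, .imp φ ψ => BTruth F V w φ → BTruth F V w ψ
  | w, .box i φ => ∀ v, F.R i w v → BTruth F V v φ

/-- Validity of a bimodal formula in a 2-frame. -/
def BValid (F : Frame2) (φ : BForm) : Prop := ∀ V w, BTruth F V w φ

/-- `F` is a frame for the set `L` of bimodal formulas. -/
def FrameFor (F : Frame2) (L : Set BForm) : Prop := ∀ φ ∈ L, BValid F φ

/-! ### Normal bimodal logics -/

/-- `φ` is a propositional tautology: it is true under every assignment of truth values
to formulas that respects `⊥` and `→` (so variables and boxed formulas act as atoms). -/
def BTaut (φ : BForm) : Prop :=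
  ∀ v : BForm → Prop, (¬ v .bot) → (∀ a b, v (.imp a b) ↔ (v a → v b)) → v φ

/-- A normal bimodal logic: contains all propositional tautologies and the K-axioms for
both boxes, and is closed under modus ponens, substitution and necessitation. -/
structure IsLogic (L : Set BForm) : Prop where
  taut : ∀ φ, BTaut φ → φ ∈ L
  kax : ∀ (i : Fin 2) (φ ψ : BForm),
    BForm.imp (.box i (.imp φ ψ)) (.imp (.box i φ) (.box i ψ)) ∈ L
  mp : ∀ φ ψ, BForm.imp φ ψ ∈ L → φ ∈ L → ψ ∈ L
  subst : ∀ φ s, φ ∈ L → BForm.subst s φ ∈ L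
  nec : ∀ (i : Fin 2) (φ : BForm), φ ∈ L → BForm.box i φ ∈ L

/-- The smallest normal bimodal logic containing a given set of bimodal formulas. -/
def SmallestLogic (S : Set BForm) : Set BForm := ⋂₀ { L : Set BForm | IsLogic L ∧ S ⊆ L }

/-- The fusion `L0 ⊕ L1`: the smallest normal bimodal logic containing `L0` (in `□0`)
and `L1` (in `□1`). -/
def Fusion (L0 L1 : Set UForm) : Set BForm :=
  SmallestLogic ((UForm.embed 0 '' L0) ∪ (UForm.embed 1 '' L1))

/-- Left commutativity axiom `□1□0 p → □0□1 p`. -/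
def lcomAx : BForm := .imp (.box 1 (.box 0 (.var 0))) (.box 0 (.box 1 (.var 0)))

/-- Right commutativity axiom `□0□1 p → □1□0 p`. -/
def rcomAx : BForm := .imp (.box 0 (.box 1 (.var 0))) (.box 1 (.box 0 (.var 0)))

/-- Confluence axiom `◇0□1 p → □1◇0 p`. -/
def confAx : BForm := .imp (.dia 0 (.box 1 (.var 0))) (.box 1 (.dia 0 (.var 0)))

/-- The commutator `[L0, L1]`: the smallest normal bimodal logic containing the fusion
together with the two commutativity axioms and the confluence axiom. -/
def Commutator (L0 L1 : Set UForm) : Set BForm :=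
  SmallestLogic ((UForm.embed 0 '' L0) ∪ (UForm.embed 1 '' L1) ∪ {lcomAx, rcomAx, confAx})

/-- `[L0, L1]^lcom`: the smallest normal bimodal logic containing the fusion together
with the left commutativity axiom only. -/
def CommutatorLcom (L0 L1 : Set UForm) : Set BForm :=
  SmallestLogic ((UForm.embed 0 '' L0) ∪ (UForm.embed 1 '' L1) ∪ {lcomAx})

/-- A normal bimodal logic has the finite model property if every bimodal formula not in
`L` fails at some point of a model based on a finite frame for `L`. -/
def HasFMP (L : Set BForm) : Prop :=
  ∀ φ, φ ∉ L → ∃ F : Frame2, Finite F.W ∧ FrameFor F L ∧ ∃ V w, ¬ BTruth F V w φ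

/-! ### Products -/

/-- The product of two unimodal frames. -/
def prodFrame (F0 F1 : Frame1) : Frame2 where
  W := F0.W × F1.W
  ne := F0.ne.elim fun a => F1.ne.elim fun b => ⟨(a, b)⟩
  R := fun i a b =>
    if i = 0 then F0.R a.1 b.1 ∧ a.2 = b.2 else F1.R a.2 b.2 ∧ a.1 = b.1

/-- The product logic `L0 × L1` of two (Kripke complete) unimodal logics: the set of
bimodal formulas valid in every product of a frame for `L0` with a frame for `L1`. -/
def ProdLogic (L0 L1 : Set UForm) : Set BForm :=
  { φ | ∀ F0 F1 : Frame1, UFrameFor F0 L0 → UFrameFor F1 L1 →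
      BValid (prodFrame F0 F1) φ }

/-! ### Relation properties and particular unimodal logics -/

/-- Weak connectedness. -/
def WeaklyConnected {W : Type*} (R : W → W → Prop) : Prop :=
  ∀ x y z, R x y → R x z → y = z ∨ R y z ∨ R z y

/-- Pseudo-transitivity. -/
def PseudoTransitive {W : Type*} (R : W → W → Prop) : Prop :=
  ∀ x y z, R x y → R y z → x = z ∨ R x z

/-- `K`: the unimodal logic determined by all frames. -/
def LogicK : Set UForm := ULog Set.univ

/-- `K3`: the unimodal logic determined by all weakly connected frames. -/
def LogicK3 : Set UForm := ULog { F | WeaklyConnected F.R }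

/-- `K4.3`: the unimodal logic determined by all transitive weakly connected frames. -/
def LogicK43 : Set UForm := ULog { F | Transitive F.R ∧ WeaklyConnected F.R }

/-- `S4.3`: the logic determined by all reflexive transitive weakly connected frames. -/
def LogicS43 : Set UForm :=
  ULog { F | Reflexive F.R ∧ Transitive F.R ∧ WeaklyConnected F.R }

/-- `S5`: the unimodal logic determined by all equivalence frames. -/
def LogicS5 : Set UForm := ULog { F | Equivalence F.R }

/-- `Diff`: the unimodal logic determined by all difference frames `(W, ≠)`. -/
def LogicDiff : Set UForm := ULog { F | ∀ a b, F.R a b ↔ a ≠ b }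

/-- `K4⁻`: the unimodal logic determined by all pseudo-transitive frames. -/
def LogicK4minus : Set UForm := ULog { F | PseudoTransitive F.R }

/-- The frame `(ω + 1, >)` on `{0, 1, 2, …, ω}`. -/
def omegaSuccGt : Frame1 := ⟨WithTop ℕ, ⟨⊤⟩, fun a b => b < a⟩

/-- The difference frame `(ω, ≠)`. -/
def omegaNeq : Frame1 := ⟨ℕ, ⟨0⟩, fun a b => a ≠ b⟩

/-- The frame `(ω, <)`. -/
def omegaLt : Frame1 := ⟨ℕ, ⟨0⟩, fun a b => a < b⟩

/-- The frame `(ω, ≤)`. -/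
def omegaLe : Frame1 := ⟨ℕ, ⟨0⟩, fun a b => a ≤ b⟩

/-- The frame `(ℚ, <)`. -/
def ratLt : Frame1 := ⟨ℚ, ⟨0⟩, fun a b => a < b⟩

/-- A unimodal frame is one-step rooted if some point sees every other point in one step. -/
def OneStepRooted (F : Frame1) : Prop := ∃ r : F.W, ∀ w : F.W, w ≠ r → F.R r w

/-- `F` contains an `(ω + 1, >)`-type chain: there are distinct points `x n` for `n ≤ ω`
such that for `n ≠ m`, `x n` is related to `x m` iff `n > m`. -/
def ContainsOmegaSuccChain (F : Frame1) : Prop :=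
  ∃ x : WithTop ℕ → F.W, Function.Injective x ∧
    ∀ n m : WithTop ℕ, n ≠ m → (F.R (x n) (x m) ↔ m < n)

/-- (lcom) for a 2-frame. -/
def Lcom (F : Frame2) : Prop :=
  ∀ x y z : F.W, F.R 0 x y → F.R 1 y z → ∃ u, F.R 1 x u ∧ F.R 0 u z

/-- (rcom) for a 2-frame. -/
def Rcom (F : Frame2) : Prop :=
  ∀ x y z : F.W, F.R 1 x y → F.R 0 y z → ∃ u, F.R 0 x u ∧ F.R 1 u z

/-- (conf) for a 2-frame. -/
def Conf (F : Frame2) : Prop :=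
  ∀ x y z : F.W, F.R 1 x y → F.R 0 x z → ∃ u, F.R 0 y u ∧ F.R 1 z u

/-! ### The formula `φ∞` -/

/-- The propositional variable `p`. -/
def pV : BForm := .var 0

/-- The formula `φ∞`: the conjunction of
`◇1◇0(p ∧ □0⊥)`,
`□1(◇0 p → ◇0(◇0 p ∧ □0□0¬p))`, and
`□0(◇1(◇0 p ∧ □0□0¬p) → ◇1(p ∧ □0¬p ∧ □0□0¬p))`. -/
def phiInf : BForm :=
  .and (.dia 1 (.dia 0 (.and pV (.box 0 .bot))))
    (.and
      (.box 1 (.imp (.dia 0 pV)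
        (.dia 0 (.and (.dia 0 pV) (.box 0 (.box 0 (.neg pV)))))))
      (.box 0 (.imp
        (.dia 1 (.and (.dia 0 pV) (.box 0 (.box 0 (.neg pV)))))
        (.dia 1 (.and pV (.and (.box 0 (.neg pV)) (.box 0 (.box 0 (.neg pV)))))))))

/-! ### The tick trick -/

/-- The fixed propositional variable `t`. -/
def tV : BForm := .var 1

/-- The tick-relation `R̄0^M`: `x R̄0^M y` iff there is `z` with `x R0 z`, the truth value
of `t` flips from `x` to `z`, and `z = y` or `z R0 y`. -/
def tickRel (F : Frame2) (V : ℕ → F.W → Prop) (x y : F.W) : Prop :=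
  ∃ z, F.R 0 x z ∧ (BTruth F V x tV ↔ ¬ BTruth F V z tV) ∧ (z = y ∨ F.R 0 z y)

/-- The defined diamond
`◆0ψ = [t → ◇0(¬t ∧ (ψ ∨ ◇0ψ))] ∧ [¬t → ◇0(t ∧ (ψ ∨ ◇0ψ))]`. -/
def blackDia (ψ : BForm) : BForm :=
  .and (.imp tV (.dia 0 (.and (.neg tV) (.or ψ (.dia 0 ψ)))))
    (.imp (.neg tV) (.dia 0 (.and tV (.or ψ (.dia 0 ψ)))))

/-- The defined box `■0ψ = ¬◆0¬ψ`. -/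
def blackBox (ψ : BForm) : BForm := .neg (blackDia (.neg ψ))

/-- The tick axiom `(t ∨ ◇1 t → t ∧ □1 t) ∧ □0(t ∨ ◇1 t → t ∧ □1 t)`. -/
def tickAx : BForm :=
  .and (.imp (.or tV (.dia 1 tV)) (.and tV (.box 1 tV)))
    (.box 0 (.imp (.or tV (.dia 1 tV)) (.and tV (.box 1 tV))))

/-- The formula `φ∞•`: the conjunction of the tick axiom with the conjuncts of `φ∞`,
where every `◇0` is replaced by `◆0` and every `□0` by `■0`. -/
def phiInfBullet : BForm :=
  .and tickAx
    (.and (.dia 1 (blackDia (.and pV (blackBox .bot))))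
      (.and
        (.box 1 (.imp (blackDia pV)
          (blackDia (.and (blackDia pV) (blackBox (blackBox (.neg pV)))))))
        (blackBox (.imp
          (.dia 1 (.and (blackDia pV) (blackBox (blackBox (.neg pV)))))
          (.dia 1 (.and pV (.and (blackBox (.neg pV)) (blackBox (blackBox (.neg pV))))))))))

/-! ### Auxiliary truth lemmas -/

theorem BTruth_var' (F : Frame2) (V : ℕ → F.W → Prop) (w : F.W) (n : ℕ) :
    BTruth F V w (.var n) ↔ V n w := Iff.rfl

theorem BTruth_imp' (F : Frame2) (V : ℕ → F.W → Prop) (w : F.W) (φ ψ : BForm) :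
    BTruth F V w (.imp φ ψ) ↔ (BTruth F V w φ → BTruth F V w ψ) := Iff.rfl

theorem BTruth_box' (F : Frame2) (V : ℕ → F.W → Prop) (w : F.W) (i : Fin 2) (φ : BForm) :
    BTruth F V w (.box i φ) ↔ ∀ v, F.R i w v → BTruth F V v φ := Iff.rfl

theorem BTruth_neg' (F : Frame2) (V : ℕ → F.W → Prop) (w : F.W) (φ : BForm) :
    BTruth F V w (.neg φ) ↔ ¬ BTruth F V w φ := Iff.rfl

theorem BTruth_and' (F : Frame2) (V : ℕ → F.W → Prop) (w : F.W) (φ ψ : BForm) :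
    BTruth F V w (.and φ ψ) ↔ BTruth F V w φ ∧ BTruth F V w ψ := by
  unfold BForm.and
  rw [BTruth_neg', BTruth_imp', BTruth_neg']
  tauto

theorem BTruth_or' (F : Frame2) (V : ℕ → F.W → Prop) (w : F.W) (φ ψ : BForm) :
    BTruth F V w (.or φ ψ) ↔ BTruth F V w φ ∨ BTruth F V w ψ := by
  unfold BForm.or
  rw [BTruth_imp', BTruth_neg']
  tauto

theorem BTruth_dia' (F : Frame2) (V : ℕ → F.W → Prop) (w : F.W) (i : Fin 2) (φ : BForm) :
    BTruth F V w (.dia i φ) ↔ ∃ v, F.R i w v ∧ BTruth F V v φ := by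
  unfold BForm.dia
  rw [BTruth_neg', BTruth_box']
  simp only [BTruth_neg']
  push_neg
  rfl

theorem BTruth_blackDia (F : Frame2) (V : ℕ → F.W → Prop) (w : F.W) (ψ : BForm) :
    BTruth F V w (blackDia ψ) ↔
      ∃ z, F.R 0 w z ∧ (BTruth F V w tV ↔ ¬ BTruth F V z tV) ∧
        (BTruth F V z ψ ∨ ∃ z', F.R 0 z z' ∧ BTruth F V z' ψ) := by
  unfold blackDia
  rw [BTruth_and', BTruth_imp', BTruth_imp', BTruth_neg']
  simp only [BTruth_dia', BTruth_and', BTruth_or', BTruth_neg', BTruth_dia']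
  by_cases h : BTruth F V w tV <;> simp [h]

theorem BTruth_blackBox (F : Frame2) (V : ℕ → F.W → Prop) (w : F.W) (ψ : BForm) :
    BTruth F V w (blackBox ψ) ↔
      ∀ z, F.R 0 w z → (BTruth F V w tV ↔ ¬ BTruth F V z tV) →
        BTruth F V z ψ ∧ ∀ z', F.R 0 z z' → BTruth F V z' ψ := by
  unfold blackBox
  rw [BTruth_neg', BTruth_blackDia]
  constructor
  · intro h z hz hf
    constructor
    · by_contra hc
      exact h ⟨z, hz, hf, Or.inl hc⟩
    · intro z' hz'
      by_contra hc
      exact h ⟨z, hz, hf, Or.inr ⟨z', hz', hc⟩⟩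
  · rintro h ⟨z, hz, hf, hor⟩
    obtain ⟨h1, h2⟩ := h z hz hf
    rcases hor with hn | ⟨z', hz', hn⟩
    · exact hn h1
    · exact hn (h2 z' hz')

theorem prodR0_iff (F0 F1 : Frame1) (a b : F0.W × F1.W) :
    (prodFrame F0 F1).R 0 a b ↔ F0.R a.1 b.1 ∧ a.2 = b.2 := by
  simp [prodFrame]

theorem prodR1_iff (F0 F1 : Frame1) (a b : F0.W × F1.W) :
    (prodFrame F0 F1).R 1 a b ↔ F1.R a.2 b.2 ∧ a.1 = b.1 := by
  simp [prodFrame, show (1 : Fin 2) ≠ 0 by decide]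

/-! ### The tick rank -/

section TickDefs

variable {W : Type} (R : W → W → Prop) (x : WithTop ℕ → W)

def ttB (u : W) : Set ℕ :=
  {n : ℕ | R u (x (n : WithTop ℕ)) ∧ ¬ R (x (n : WithTop ℕ)) u ∧ u ≠ x (n : WithTop ℕ)}

def ttTop (u : W) : Prop := ∀ n : ℕ, n ∈ ttB R x u

noncomputable def ttLvl (u : W) : ℕ := sInf {n : ℕ | n ∉ ttB R x u}

def ttT (u : W) : Prop := ttTop R x u ∨ Odd (ttLvl R x u)

end TickDefs

section TickLemmas

variable {W : Type} {R : W → W → Prop} {x : WithTop ℕ → W}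

theorem ttB_mono (ht : Transitive R) {u z : W} (h : R u z) : ttB R x z ⊆ ttB R x u := by
  rintro n ⟨h1, h2, h3⟩
  exact ⟨ht h h1, fun hc => h2 (ht hc h), fun hc => h2 (hc ▸ h)⟩

theorem ttB_dc (ht : Transitive R)
    (hR : ∀ n m : WithTop ℕ, n ≠ m → (R (x n) (x m) ↔ m < n))
    {u : W} {m n : ℕ} (hmn : m ≤ n) (hn : n ∈ ttB R x u) : m ∈ ttB R x u := by
  rcases eq_or_lt_of_le hmn with rfl | hlt
  · exact hn
  obtain ⟨h1, h2, h3⟩ := hn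
  have hne : ((n : ℕ) : WithTop ℕ) ≠ ((m : ℕ) : WithTop ℕ) := by exact_mod_cast hlt.ne'
  have hnm : R (x (n : WithTop ℕ)) (x (m : WithTop ℕ)) := (hR _ _ hne).mpr (by exact_mod_cast hlt)
  have hnotnm : ¬ ((n : WithTop ℕ) < (m : WithTop ℕ)) := by exact_mod_cast not_lt.mpr hmn
  refine ⟨ht h1 hnm, ?_, ?_⟩
  · intro hc
    exact hnotnm ((hR _ _ (Ne.symm hne)).mp (ht hc h1))
  · rintro rfl
    exact hnotnm ((hR _ _ (Ne.symm hne)).mp h1)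

theorem ttTop_not_of_not_mem {u : W} {n : ℕ} (h : n ∉ ttB R x u) : ¬ ttTop R x u :=
  fun hc => h (hc n)

theorem ttLvl_not_mem {u : W} (hu : ¬ ttTop R x u) : ttLvl R x u ∉ ttB R x u := by
  simp only [ttTop, not_forall] at hu
  exact Nat.sInf_mem hu

theorem ttLvl_mem_iff (ht : Transitive R)
    (hR : ∀ n m : WithTop ℕ, n ≠ m → (R (x n) (x m) ↔ m < n))
    {u : W} (hu : ¬ ttTop R x u) (m : ℕ) :
    m ∈ ttB R x u ↔ m < ttLvl R x u := by
  constructor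
  · intro hm
    by_contra hc
    push_neg at hc
    exact ttLvl_not_mem hu (ttB_dc ht hR hc hm)
  · intro hm
    by_contra hc
    exact absurd (Nat.sInf_le hc) (not_le.mpr hm)

theorem ttB_chain (hinj : Function.Injective x)
    (hR : ∀ n m : WithTop ℕ, n ≠ m → (R (x n) (x m) ↔ m < n))
    (n : ℕ) : ttB R x (x (n : WithTop ℕ)) = Set.Iio n := by
  ext m
  simp only [ttB, Set.mem_setOf_eq, Set.mem_Iio]
  constructor
  · rintro ⟨h1, h2, h3⟩
    rcases eq_or_ne n m with rfl | hne
    · exact absurd rfl h3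
    · have hne' : ((n : ℕ) : WithTop ℕ) ≠ ((m : ℕ) : WithTop ℕ) := by exact_mod_cast hne
      have := (hR _ _ hne').mp h1
      exact_mod_cast this
  · intro hm
    have hne : ((n : ℕ) : WithTop ℕ) ≠ ((m : ℕ) : WithTop ℕ) := by exact_mod_cast hm.ne'
    refine ⟨(hR _ _ hne).mpr (by exact_mod_cast hm), ?_, fun hc => hne (hinj hc)⟩
    intro hc
    have := (hR _ _ (Ne.symm hne)).mp hc
    have : n < m := by exact_mod_cast this
    omega

theorem ttTop_xtop (hinj : Function.Injective x)
    (hR : ∀ n m : WithTop ℕ, n ≠ m → (R (x n) (x m) ↔ m < n)) :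
    ttTop R x (x ⊤) := by
  intro n
  refine ⟨(hR _ _ (Ne.symm (WithTop.coe_ne_top (a := (n : ℕ))))).mpr ?_, ?_, ?_⟩
  · exact_mod_cast WithTop.coe_lt_top (n : ℕ)
  · intro hc
    have := (hR _ _ (WithTop.coe_ne_top (a := (n : ℕ)))).mp hc
    exact absurd this (by simp)
  · intro hc
    exact WithTop.coe_ne_top (a := (n : ℕ)) (hinj hc).symm

theorem ttTop_chain_not (hinj : Function.Injective x)
    (hR : ∀ n m : WithTop ℕ, n ≠ m → (R (x n) (x m) ↔ m < n))
    (n : ℕ) : ¬ ttTop R x (x (n : WithTop ℕ)) := by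
  intro h
  have := h n
  rw [ttB_chain hinj hR] at this
  simp at this

theorem ttLvl_chain (hinj : Function.Injective x)
    (hR : ∀ n m : WithTop ℕ, n ≠ m → (R (x n) (x m) ↔ m < n))
    (n : ℕ) : ttLvl R x (x (n : WithTop ℕ)) = n := by
  unfold ttLvl
  rw [ttB_chain hinj hR]
  have h : {m : ℕ | m ∉ Set.Iio n} = Set.Ici n := by
    ext m; simp [not_lt]
  rw [h]
  exact csInf_Ici

theorem ttT_parity {u : W} (hu : ¬ ttTop R x u) : ttT R x u ↔ Odd (ttLvl R x u) :=
  or_iff_right hu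

theorem ttT_chain (hinj : Function.Injective x)
    (hR : ∀ n m : WithTop ℕ, n ≠ m → (R (x n) (x m) ↔ m < n))
    (n : ℕ) : ttT R x (x (n : WithTop ℕ)) ↔ Odd n := by
  rw [ttT_parity (ttTop_chain_not hinj hR n), ttLvl_chain hinj hR n]

theorem ttT_xtop (hinj : Function.Injective x)
    (hR : ∀ n m : WithTop ℕ, n ≠ m → (R (x n) (x m) ↔ m < n)) :
    ttT R x (x ⊤) := Or.inl (ttTop_xtop hinj hR)

theorem tt_step (ht : Transitive R)
    (hR : ∀ n m : WithTop ℕ, n ≠ m → (R (x n) (x m) ↔ m < n))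
    {u z : W} (h : R u z) (hu : ¬ ttTop R x u) :
    ¬ ttTop R x z ∧ ttLvl R x z ≤ ttLvl R x u := by
  have hsub := ttB_mono (x := x) ht h
  have hz : ¬ ttTop R x z := by
    simp only [ttTop, not_forall] at hu ⊢
    obtain ⟨n, hn⟩ := hu
    exact ⟨n, fun hc => hn (hsub hc)⟩
  refine ⟨hz, ?_⟩
  by_contra hc
  push_neg at hc
  exact ttLvl_not_mem hu (hsub ((ttLvl_mem_iff ht hR hz _).mpr hc))

theorem tt_flipstep (ht : Transitive R)
    (hR : ∀ n m : WithTop ℕ, n ≠ m → (R (x n) (x m) ↔ m < n))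
    {u z : W} (h : R u z) (hu : ¬ ttTop R x u)
    (hf : ttT R x u ↔ ¬ ttT R x z) :
    ¬ ttTop R x z ∧ ttLvl R x z < ttLvl R x u := by
  obtain ⟨hz, hle⟩ := tt_step ht hR h hu
  refine ⟨hz, lt_of_le_of_ne hle ?_⟩
  intro he
  rw [ttT_parity hu, ttT_parity hz, he] at hf
  exact iff_not_self hf

theorem tt_flipstep_top {u z : W} (hu : ttTop R x u)
    (hf : ttT R x u ↔ ¬ ttT R x z) : ¬ ttTop R x z :=
  fun hc => (hf.mp (Or.inl hu)) (Or.inl hc)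

theorem tt_access (ht : Transitive R)
    (hR : ∀ n m : WithTop ℕ, n ≠ m → (R (x n) (x m) ↔ m < n))
    {u : W} {m : ℕ} (hu : ¬ ttTop R x u) (hm : m < ttLvl R x u) :
    R u (x (m : WithTop ℕ)) :=
  ((ttLvl_mem_iff ht hR hu m).mpr hm).1

end TickLemmas
/-- **Lemma 4.** If `F0` is a transitive weakly connected frame containing an
`(ω+1, >)`-type chain and `F1` is a countably infinite one-step rooted frame, then
`φ∞•` is satisfiable in `F0 × F1`. -/
theorem phiInfBullet_sat_in_product (F0 : Frame1)
    (ht : Transitive F0.R) (hwc : WeaklyConnected F0.R)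
    (hchain : ContainsOmegaSuccChain F0)
    (F1 : Frame1) (hcount : Countable F1.W) (hinf : Infinite F1.W)
    (hroot : OneStepRooted F1) :
    ∃ V w, BTruth (prodFrame F0 F1) V w phiInfBullet := by
  classical
  obtain ⟨x, hinj, hR⟩ := hchain
  obtain ⟨r, hr⟩ := hroot
  -- an injective enumeration of `F1.W` starting at the root
  let e := Infinite.natEmbedding F1.W
  let f : ℕ → F1.W := fun n => Equiv.swap r (e 0) (e n)
  have hfinj : Function.Injective f := fun a b hab =>
    e.injective ((Equiv.swap r (e 0)).injective hab)
  have hf0 : f 0 = r := Equiv.swap_apply_right r (e 0)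
  have hfr : ∀ n : ℕ, F1.R r (f (n + 1)) := by
    intro n
    apply hr
    intro hc
    have h2 : f (n + 1) = f 0 := by rw [hf0]; exact hc
    exact Nat.succ_ne_zero n (hfinj h2)
  -- basic chain facts
  have hxlt : ∀ n m : ℕ, m < n → F0.R (x (n : WithTop ℕ)) (x (m : WithTop ℕ)) := by
    intro n m h
    have hne : ((n : ℕ) : WithTop ℕ) ≠ ((m : ℕ) : WithTop ℕ) := by exact_mod_cast h.ne'
    exact (hR _ _ hne).mpr (by exact_mod_cast h)
  have hxtop : ∀ n : ℕ, F0.R (x ⊤) (x (n : WithTop ℕ)) := by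
    intro n
    refine (hR _ _ (Ne.symm (WithTop.coe_ne_top (a := (n : ℕ))))).mpr ?_
    exact_mod_cast WithTop.coe_lt_top (n : ℕ)
  -- the valuation
  let Vv : ℕ → F0.W × F1.W → Prop := fun n a =>
    match n with
    | 0 => ¬ ttTop F0.R x a.1 ∧ a.2 = f (ttLvl F0.R x a.1 + 1)
    | 1 => ttT F0.R x a.1
    | _ => False
  refine ⟨Vv, (x ⊤, r), ?_⟩
  have BTruth_neg' : ∀ (w : F0.W × F1.W) (φ : BForm), BTruth (prodFrame F0 F1) Vv w (.neg φ) ↔ ¬ BTruth (prodFrame F0 F1) Vv w φ :=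
    fun w => BTruth_neg' (prodFrame F0 F1) Vv w
  have BTruth_imp' : ∀ (w : F0.W × F1.W) (φ ψ : BForm),
      BTruth (prodFrame F0 F1) Vv w (.imp φ ψ) ↔ (BTruth (prodFrame F0 F1) Vv w φ → BTruth (prodFrame F0 F1) Vv w ψ) := fun w => BTruth_imp' (prodFrame F0 F1) Vv w
  have BTruth_and' : ∀ (w : F0.W × F1.W) (φ ψ : BForm),
      BTruth (prodFrame F0 F1) Vv w (.and φ ψ) ↔ BTruth (prodFrame F0 F1) Vv w φ ∧ BTruth (prodFrame F0 F1) Vv w ψ := fun w => BTruth_and' (prodFrame F0 F1) Vv w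
  have BTruth_or' : ∀ (w : F0.W × F1.W) (φ ψ : BForm),
      BTruth (prodFrame F0 F1) Vv w (.or φ ψ) ↔ BTruth (prodFrame F0 F1) Vv w φ ∨ BTruth (prodFrame F0 F1) Vv w ψ := fun w => BTruth_or' (prodFrame F0 F1) Vv w
  have BTruth_box' : ∀ (w : F0.W × F1.W) (i : Fin 2) (φ : BForm),
      BTruth (prodFrame F0 F1) Vv w (.box i φ) ↔ ∀ v : F0.W × F1.W, (prodFrame F0 F1).R i w v → BTruth (prodFrame F0 F1) Vv v φ :=
    fun w => BTruth_box' (prodFrame F0 F1) Vv w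
  have BTruth_dia' : ∀ (w : F0.W × F1.W) (i : Fin 2) (φ : BForm),
      BTruth (prodFrame F0 F1) Vv w (.dia i φ) ↔ ∃ v : F0.W × F1.W, (prodFrame F0 F1).R i w v ∧ BTruth (prodFrame F0 F1) Vv v φ :=
    fun w => BTruth_dia' (prodFrame F0 F1) Vv w
  have BTruth_blackDia : ∀ (w : F0.W × F1.W) (ψ : BForm),
      BTruth (prodFrame F0 F1) Vv w (blackDia ψ) ↔
        ∃ z : F0.W × F1.W, (prodFrame F0 F1).R 0 w z ∧ (BTruth (prodFrame F0 F1) Vv w tV ↔ ¬ BTruth (prodFrame F0 F1) Vv z tV) ∧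
          (BTruth (prodFrame F0 F1) Vv z ψ ∨ ∃ z' : F0.W × F1.W, (prodFrame F0 F1).R 0 z z' ∧ BTruth (prodFrame F0 F1) Vv z' ψ) :=
    fun w => BTruth_blackDia (prodFrame F0 F1) Vv w
  have BTruth_blackBox : ∀ (w : F0.W × F1.W) (ψ : BForm),
      BTruth (prodFrame F0 F1) Vv w (blackBox ψ) ↔
        ∀ z : F0.W × F1.W, (prodFrame F0 F1).R 0 w z → (BTruth (prodFrame F0 F1) Vv w tV ↔ ¬ BTruth (prodFrame F0 F1) Vv z tV) →
          BTruth (prodFrame F0 F1) Vv z ψ ∧ ∀ z' : F0.W × F1.W, (prodFrame F0 F1).R 0 z z' → BTruth (prodFrame F0 F1) Vv z' ψ :=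
    fun w => BTruth_blackBox (prodFrame F0 F1) Vv w
  have hVt : ∀ a : F0.W × F1.W, BTruth (prodFrame F0 F1) Vv a tV ↔ ttT F0.R x a.1 :=
    fun _ => Iff.rfl
  have hVp : ∀ a : F0.W × F1.W, BTruth (prodFrame F0 F1) Vv a pV ↔
      (¬ ttTop F0.R x a.1 ∧ a.2 = f (ttLvl F0.R x a.1 + 1)) := fun _ => Iff.rfl
  have hflipiff : ∀ a b : F0.W × F1.W,
      ((BTruth (prodFrame F0 F1) Vv a tV ↔ ¬ BTruth (prodFrame F0 F1) Vv b tV) ↔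
        (ttT F0.R x a.1 ↔ ¬ ttT F0.R x b.1)) := fun a b => by rw [hVt, hVt]
  -- ¬p lemma : points with level < s in column f (s+1) don't satisfy p
  have hnp : ∀ (s : ℕ) (c : F0.W × F1.W), ttLvl F0.R x c.1 < s → c.2 = f (s + 1) →
      BTruth (prodFrame F0 F1) Vv c (.neg pV) := by
    intro s c hlvl hcol
    rw [BTruth_neg', hVp]
    rintro ⟨_, hcp⟩
    have : f (s + 1) = f (ttLvl F0.R x c.1 + 1) := by rw [← hcol, hcp]
    have := hfinj this
    omega
  unfold phiInfBullet
  rw [BTruth_and']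
  constructor
  · -- tick axiom
    have key : ∀ a : F0.W × F1.W, BTruth (prodFrame F0 F1) Vv a
        (.imp (.or tV (.dia 1 tV)) (.and tV (.box 1 tV))) := by
      intro a
      rw [BTruth_imp', BTruth_or', BTruth_dia', BTruth_and', BTruth_box']
      intro h
      have ha : ttT F0.R x a.1 := by
        rcases h with h | ⟨b, hb, h⟩
        · exact (hVt a).mp h
        · have hb' := (prodR1_iff F0 F1 a b).mp hb
          rw [hb'.2]
          exact (hVt b).mp h
      refine ⟨(hVt a).mpr ha, ?_⟩
      intro b hb
      have hb' := (prodR1_iff F0 F1 a b).mp hb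
      exact (hVt b).mpr (hb'.2 ▸ ha)
    unfold tickAx
    rw [BTruth_and']
    exact ⟨key _, fun b _ => key b⟩
  rw [BTruth_and']
  constructor
  · -- first conjunct : ◇1 ◆0 (p ∧ ■0 ⊥)
    rw [BTruth_dia']
    refine ⟨(x ⊤, f 1), ?_, ?_⟩
    · rw [prodR1_iff]
      exact ⟨hfr 0, rfl⟩
    · rw [BTruth_blackDia]
      refine ⟨(x ((0 : ℕ) : WithTop ℕ), f 1), ?_, ?_, Or.inl ?_⟩
      · rw [prodR0_iff]
        exact ⟨hxtop 0, rfl⟩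
      · rw [hVt, hVt]
        constructor
        · intro _ h0
          have := (ttT_chain hinj hR 0).mp h0
          exact (by decide : ¬ Odd 0) this
        · intro _
          exact ttT_xtop hinj hR
      · rw [BTruth_and']
        constructor
        · rw [hVp]
          refine ⟨ttTop_chain_not hinj hR 0, ?_⟩
          rw [ttLvl_chain hinj hR 0]
        · rw [BTruth_blackBox]
          rintro z hz hf
          exfalso
          rw [prodR0_iff] at hz
          have h0 := tt_flipstep ht hR hz.1 (ttTop_chain_not hinj hR 0)
            ((hflipiff _ _).mp hf)
          rw [ttLvl_chain hinj hR 0] at h0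
          exact Nat.not_lt_zero _ h0.2
  rw [BTruth_and']
  constructor
  · -- second conjunct : □1 (◆0 p → ◆0 (◆0 p ∧ ■0 ■0 ¬p))
    rw [BTruth_box']
    rintro ⟨b1, b2⟩ hb
    rw [prodR1_iff] at hb
    obtain ⟨hrb, hbeq⟩ := hb
    have hbeq' : b1 = x ⊤ := hbeq.symm
    subst hbeq'
    rw [BTruth_imp']
    intro hyp
    rw [BTruth_blackDia] at hyp
    obtain ⟨z, hz, hzflip, hzor⟩ := hyp
    rw [prodR0_iff] at hz
    -- extract a p-point in column b2
    obtain ⟨u1, hu1p, hu1col⟩ :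
        ∃ u1 : F0.W × F1.W, BTruth (prodFrame F0 F1) Vv u1 pV ∧ u1.2 = b2 := by
      rcases hzor with h | ⟨z', hz', h⟩
      · exact ⟨z, h, hz.2.symm⟩
      · have hz' := (prodR0_iff F0 F1 z z').mp hz'
        exact ⟨z', h, by rw [← hz'.2, ← hz.2]⟩
    rw [hVp] at hu1p
    obtain ⟨hu1top, hu1f⟩ := hu1p
    set n := ttLvl F0.R x u1.1 with hn
    have hbcol : b2 = f (n + 1) := by rw [← hu1col, hu1f]
    -- the inner point (x (n+1), b2)
    have hinner : BTruth (prodFrame F0 F1) Vv (x (((n + 1) : ℕ) : WithTop ℕ), b2)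
        (.and (blackDia pV) (blackBox (blackBox (.neg pV)))) := by
      rw [BTruth_and']
      constructor
      · rw [BTruth_blackDia]
        refine ⟨(x ((n : ℕ) : WithTop ℕ), b2), ?_, ?_, Or.inl ?_⟩
        · rw [prodR0_iff]
          exact ⟨hxlt (n + 1) n (by omega), rfl⟩
        · rw [hVt, hVt]
          rw [ttT_chain hinj hR, ttT_chain hinj hR]
          exact Nat.odd_add_one
        · rw [hVp]
          refine ⟨ttTop_chain_not hinj hR n, ?_⟩
          rw [ttLvl_chain hinj hR n]
          exact hbcol
      · rw [BTruth_blackBox]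
        rintro z1 hz1 hf1
        rw [prodR0_iff] at hz1
        have hstep1 := tt_flipstep ht hR hz1.1 (ttTop_chain_not hinj hR (n + 1))
          ((hflipiff _ _).mp hf1)
        rw [ttLvl_chain hinj hR (n + 1)] at hstep1
        have hmain : ∀ c : F0.W × F1.W, ¬ ttTop F0.R x c.1 → ttLvl F0.R x c.1 ≤ n →
            c.2 = b2 → BTruth (prodFrame F0 F1) Vv c (blackBox (.neg pV)) := by
          intro c hctop hclvl hccol
          rw [BTruth_blackBox]
          rintro z2 hz2 hf2
          rw [prodR0_iff] at hz2
          have hstep2 := tt_flipstep ht hR hz2.1 hctop ((hflipiff _ _).mp hf2)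
          constructor
          · refine hnp n z2 (by omega) ?_
            rw [← hz2.2, hccol, hbcol]
          · intro z3 hz3
            rw [prodR0_iff] at hz3
            have hstep3 := tt_step ht hR hz3.1 hstep2.1
            refine hnp n z3 (by omega) ?_
            rw [← hz3.2, ← hz2.2, hccol, hbcol]
        constructor
        · exact hmain z1 hstep1.1 (by omega) (by rw [← hz1.2])
        · intro z' hz'
          rw [prodR0_iff] at hz'
          have hstep' := tt_step ht hR hz'.1 hstep1.1
          refine hmain z' hstep'.1 (by omega) ?_
          rw [← hz'.2, ← hz1.2]
    rw [BTruth_blackDia]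
    by_cases hpar : Odd (n + 1)
    · refine ⟨(x (((n + 2) : ℕ) : WithTop ℕ), b2), ?_, ?_,
        Or.inr ⟨(x (((n + 1) : ℕ) : WithTop ℕ), b2), ?_, hinner⟩⟩
      · rw [prodR0_iff]
        exact ⟨hxtop (n + 2), rfl⟩
      · rw [hVt, hVt]
        constructor
        · intro _ hc
          have h2 := (ttT_chain hinj hR (n + 2)).mp hc
          rw [Nat.odd_add_one] at h2
          exact h2 hpar
        · intro _
          exact ttT_xtop hinj hR
      · rw [prodR0_iff]
        exact ⟨hxlt (n + 2) (n + 1) (by omega), rfl⟩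
    · refine ⟨(x (((n + 1) : ℕ) : WithTop ℕ), b2), ?_, ?_, Or.inl hinner⟩
      · rw [prodR0_iff]
        exact ⟨hxtop (n + 1), rfl⟩
      · rw [hVt, hVt]
        constructor
        · intro _ hc
          exact hpar ((ttT_chain hinj hR (n + 1)).mp hc)
        · intro _
          exact ttT_xtop hinj hR
  · -- third conjunct
    rw [BTruth_blackBox]
    have hkey : ∀ u0 : F0.W, ¬ ttTop F0.R x u0 →
        BTruth (prodFrame F0 F1) Vv (u0, r)
          (.imp (.dia 1 (.and (blackDia pV) (blackBox (blackBox (.neg pV)))))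
            (.dia 1 (.and pV (.and (blackBox (.neg pV)) (blackBox (blackBox (.neg pV))))))) := by
      intro u0 hu0top
      rw [BTruth_imp', BTruth_dia']
      rintro ⟨⟨v1, v2⟩, hv, hH⟩
      rw [prodR1_iff] at hv
      obtain ⟨hrv, hveq⟩ := hv
      have hveq' : u0 = v1 := hveq
      subst hveq'
      rw [BTruth_and'] at hH
      obtain ⟨hH1, hH2⟩ := hH
      set s := ttLvl F0.R x u0 with hs
      -- analyze the p-point below u0
      rw [BTruth_blackDia] at hH1
      obtain ⟨q, hq, hqf, hqor⟩ := hH1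
      rw [prodR0_iff] at hq
      have hqstep := tt_flipstep ht hR hq.1 hu0top ((hflipiff _ _).mp hqf)
      obtain ⟨u1, hu1p, hu1col, hu1lvl⟩ :
          ∃ u1 : F0.W × F1.W, BTruth (prodFrame F0 F1) Vv u1 pV ∧ u1.2 = v2 ∧
            ttLvl F0.R x u1.1 ≤ ttLvl F0.R x q.1 := by
        rcases hqor with h | ⟨z', hz', h⟩
        · exact ⟨q, h, hq.2.symm, le_refl _⟩
        · rw [prodR0_iff] at hz'
          exact ⟨z', h, by rw [← hz'.2, ← hq.2], (tt_step ht hR hz'.1 hqstep.1).2⟩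
      rw [hVp] at hu1p
      obtain ⟨hu1top, hu1f⟩ := hu1p
      set k := ttLvl F0.R x u1.1 with hk
      have hvcol : v2 = f (k + 1) := by rw [← hu1col, hu1f]
      have hks : k < s := lt_of_le_of_lt hu1lvl hqstep.2
      -- ■0■0¬p forces k + 1 = s
      have hkeq : k + 1 = s := by
        by_contra hne
        have hk1 : k + 1 < s := by omega
        rw [BTruth_blackBox] at hH2
        -- choose the stepping point x j
        obtain ⟨j, hj1, hj2, hj3⟩ : ∃ j : ℕ, F0.R u0 (x ((j : ℕ) : WithTop ℕ)) ∧
            (Odd s ↔ ¬ Odd j) ∧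
            (j = k + 1 ∨ F0.R (x ((j : ℕ) : WithTop ℕ)) (x (((k + 1) : ℕ) : WithTop ℕ))) := by
          by_cases hp : (Odd (k + 1) ↔ Odd s)
          · refine ⟨k + 2, ?_, ?_, Or.inr (hxlt (k + 2) (k + 1) (by omega))⟩
            · refine tt_access ht hR hu0top ?_
              have hOs := Nat.odd_iff (n := s)
              have hO1 := Nat.odd_iff (n := k + 1)
              rw [hO1, hOs] at hp
              omega
            · have hOs := Nat.odd_iff (n := s)
              have hO1 := Nat.odd_iff (n := k + 1)
              have hO2 := Nat.odd_iff (n := k + 2)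
              rw [hOs, hO2]
              rw [hO1, hOs] at hp
              omega
          · refine ⟨k + 1, tt_access ht hR hu0top hk1, ?_, Or.inl rfl⟩
            have hOs := Nat.odd_iff (n := s)
            have hO1 := Nat.odd_iff (n := k + 1)
            rw [hOs, hO1]
            rw [hO1, hOs] at hp
            omega
        have hstepj : (prodFrame F0 F1).R 0 (u0, v2) (x ((j : ℕ) : WithTop ℕ), v2) := by
          rw [prodR0_iff]
          exact ⟨hj1, rfl⟩
        have hflipj : BTruth (prodFrame F0 F1) Vv (u0, v2) tV ↔
            ¬ BTruth (prodFrame F0 F1) Vv (x ((j : ℕ) : WithTop ℕ), v2) tV := by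
          rw [hVt, hVt]
          show ttT F0.R x u0 ↔ ¬ ttT F0.R x (x ((j : ℕ) : WithTop ℕ))
          rw [ttT_parity hu0top, ttT_chain hinj hR]
          exact hj2
        obtain ⟨hbb1, hbb2⟩ := hH2 _ hstepj hflipj
        have hbbk : BTruth (prodFrame F0 F1) Vv (x (((k + 1) : ℕ) : WithTop ℕ), v2)
            (blackBox (.neg pV)) := by
          rcases hj3 with rfl | hj3
          · exact hbb1
          · refine hbb2 _ ?_
            rw [prodR0_iff]
            exact ⟨hj3, rfl⟩
        rw [BTruth_blackBox] at hbbk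
        have hstepk : (prodFrame F0 F1).R 0 (x (((k + 1) : ℕ) : WithTop ℕ), v2)
            (x ((k : ℕ) : WithTop ℕ), v2) := by
          rw [prodR0_iff]
          exact ⟨hxlt (k + 1) k (by omega), rfl⟩
        have hflipk : BTruth (prodFrame F0 F1) Vv (x (((k + 1) : ℕ) : WithTop ℕ), v2) tV ↔
            ¬ BTruth (prodFrame F0 F1) Vv (x ((k : ℕ) : WithTop ℕ), v2) tV := by
          rw [hVt, hVt]
          rw [ttT_chain hinj hR, ttT_chain hinj hR]
          exact Nat.odd_add_one
        have := (hbbk _ hstepk hflipk).1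
        rw [BTruth_neg', hVp] at this
        refine this ⟨ttTop_chain_not hinj hR k, ?_⟩
        rw [ttLvl_chain hinj hR k]
        exact hvcol
      -- now produce the witness column f (s + 1)
      rw [BTruth_dia']
      refine ⟨(u0, f (s + 1)), ?_, ?_⟩
      · rw [prodR1_iff]
        exact ⟨hfr s, rfl⟩
      · rw [BTruth_and']
        refine ⟨(hVp _).mpr ⟨hu0top, rfl⟩, ?_⟩
        rw [BTruth_and']
        constructor
        · rw [BTruth_blackBox]
          rintro d hd hdf
          rw [prodR0_iff] at hd
          have hdstep := tt_flipstep ht hR hd.1 hu0top ((hflipiff _ _).mp hdf)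
          have hdlt : ttLvl F0.R x d.1 < s := hdstep.2
          constructor
          · exact hnp s d hdlt (by rw [← hd.2])
          · intro d' hd'
            rw [prodR0_iff] at hd'
            have hdstep' := tt_step ht hR hd'.1 hdstep.1
            refine hnp s d' (by omega) ?_
            rw [← hd'.2, ← hd.2]
        · rw [BTruth_blackBox]
          rintro d hd hdf
          rw [prodR0_iff] at hd
          have hdstep := tt_flipstep ht hR hd.1 hu0top ((hflipiff _ _).mp hdf)
          have hdlt : ttLvl F0.R x d.1 < s := hdstep.2
          have hmain : ∀ c : F0.W × F1.W, ¬ ttTop F0.R x c.1 → ttLvl F0.R x c.1 < s →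
              c.2 = f (s + 1) → BTruth (prodFrame F0 F1) Vv c (blackBox (.neg pV)) := by
            intro c hctop hclvl hccol
            rw [BTruth_blackBox]
            rintro z2 hz2 hf2
            rw [prodR0_iff] at hz2
            have hstep2 := tt_flipstep ht hR hz2.1 hctop ((hflipiff _ _).mp hf2)
            constructor
            · exact hnp s z2 (by omega) (by rw [← hz2.2, hccol])
            · intro z3 hz3
              rw [prodR0_iff] at hz3
              have hstep3 := tt_step ht hR hz3.1 hstep2.1
              exact hnp s z3 (by omega) (by rw [← hz3.2, ← hz2.2, hccol])
          constructor
          · exact hmain d hdstep.1 hdlt (by rw [← hd.2])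
          · intro d' hd'
            rw [prodR0_iff] at hd'
            have hdstep' := tt_step ht hR hd'.1 hdstep.1
            refine hmain d' hdstep'.1 (by omega) ?_
            rw [← hd'.2, ← hd.2]
    rintro ⟨z1, z2⟩ hz hf
    rw [prodR0_iff] at hz
    have hztop : ¬ ttTop F0.R x z1 :=
      tt_flipstep_top (ttTop_xtop hinj hR) ((hflipiff _ _).mp hf)
    have hz2' : r = z2 := hz.2
    subst hz2'
    constructor
    · exact hkey z1 hztop
    · rintro ⟨w1, w2⟩ hw
      rw [prodR0_iff] at hw
      have hwtop := (tt_step ht hR hw.1 hztop).1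
      have hw2' : r = w2 := hw.2
      subst hw2'
      exact hkey w1 hwtop
end

section
/- Let F = (W,R0,R1) be any 2-frame such that R0 is weakly connected, R1 is pseudo-transitive, and R0, R1 left-commute (i.e., (lcom) holds). If the formula ψ∞ is satisfiable in F (i.e., ψ∞ holds at some point of some model based on F), then W is infinite. -/
set_option linter.unusedVariables false

/-- The propositional variable `q`. -/
def qV : BForm := .var 1

/-- `□1⁺ψ = ψ ∧ □1ψ`. -/
def boxPlus1 (ψ : BForm) : BForm := .and ψ (.box 1 ψ)

/-- The formula `ψ∞`: the conjunction of
`◇0(p ∧ ¬q ∧ □0¬q ∧ □1¬q)`,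
`□1⁺◇0(q ∧ □1¬q)`,
`□1⁺□0(q → ◇1(p ∧ ¬q ∧ □0¬q ∧ ◇1 q))`, and
`□1⁺□0□0(p → □0¬p)`. -/
def psiInf : BForm :=
  .and (.dia 0 (.and pV (.and (.neg qV) (.and (.box 0 (.neg qV)) (.box 1 (.neg qV))))))
    (.and (boxPlus1 (.dia 0 (.and qV (.box 1 (.neg qV)))))
      (.and (boxPlus1 (.box 0 (.imp qV
          (.dia 1 (.and pV (.and (.neg qV) (.and (.box 0 (.neg qV)) (.dia 1 qV))))))))
        (boxPlus1 (.box 0 (.box 0 (.imp pV (.box 0 (.neg pV))))))))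


section Helpers
variable (F : Frame2) (V : ℕ → F.W → Prop)

lemma band_iff (w : F.W) (φ ψ : BForm) :
    BTruth F V w (BForm.and φ ψ) ↔ BTruth F V w φ ∧ BTruth F V w ψ := by
  simp only [BForm.and, BForm.neg, BTruth]
  tauto

lemma bdia_iff (w : F.W) (i : Fin 2) (φ : BForm) :
    BTruth F V w (BForm.dia i φ) ↔ ∃ v, F.R i w v ∧ BTruth F V v φ := by
  simp only [BForm.dia, BForm.neg, BTruth]
  constructor
  · intro h
    by_contra hc
    push_neg at hc
    exact h fun v hv hp => hc v hv hp
  · rintro ⟨v, hv, hp⟩ hall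
    exact hall v hv hp

end Helpers

/-- **Lemma 5.** If the 2-frame `F` has weakly connected `R0`, pseudo-transitive `R1`,
and `R0, R1` left-commute, then satisfiability of `ψ∞` in `F` forces `F` to be
infinite. -/
theorem infinite_of_psiInf_sat (F : Frame2)
    (hwc : WeaklyConnected (F.R 0)) (hpt : PseudoTransitive (F.R 1))
    (hl : Lcom F)
    (V : ℕ → F.W → Prop) (w : F.W) (h : BTruth F V w psiInf) :
    Infinite F.W := by
  classical
  unfold psiInf boxPlus1 at h
  obtain ⟨h1, h'⟩ := (band_iff F V w _ _).mp h
  obtain ⟨h2, h''⟩ := (band_iff F V w _ _).mp h'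
  obtain ⟨h3, h4⟩ := (band_iff F V w _ _).mp h''
  obtain ⟨h2w, h2b⟩ := (band_iff F V w _ _).mp h2
  obtain ⟨h3w, h3b⟩ := (band_iff F V w _ _).mp h3
  obtain ⟨h4w, h4b⟩ := (band_iff F V w _ _).mp h4
  set X : F.W → Prop := fun x => x = w ∨ F.R 1 w x with hX
  -- conjunct (1)
  obtain ⟨a, hwa, ha2⟩ := (bdia_iff F V w 0 _).mp h1
  obtain ⟨haP, ha3⟩ := (band_iff F V a _ _).mp ha2
  obtain ⟨haQ, ha4⟩ := (band_iff F V a _ _).mp ha3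
  obtain ⟨ha0, ha1⟩ := (band_iff F V a _ _).mp ha4
  have hPa : V 0 a := haP
  have ha0n : ∀ v, F.R 0 a v → ¬ V 1 v := fun v hv hq => ha0 v hv hq
  have ha1n : ∀ v, F.R 1 a v → ¬ V 1 v := fun v hv hq => ha1 v hv hq
  -- conjunct (2)
  have H2 : ∀ x, X x → ∃ b, F.R 0 x b ∧ V 1 b ∧ ∀ v, F.R 1 b v → ¬ V 1 v := by
    rintro x (rfl | hx)
    · obtain ⟨b, hbR, hb2⟩ := (bdia_iff F V x 0 _).mp h2w
      obtain ⟨hq, hbox⟩ := (band_iff F V b _ _).mp hb2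
      exact ⟨b, hbR, hq, fun v hv hq2 => hbox v hv hq2⟩
    · obtain ⟨b, hbR, hb2⟩ := (bdia_iff F V x 0 _).mp (h2b x hx)
      obtain ⟨hq, hbox⟩ := (band_iff F V b _ _).mp hb2
      exact ⟨b, hbR, hq, fun v hv hq2 => hbox v hv hq2⟩
  -- conjunct (3)
  have H3aux : ∀ x, BTruth F V x (BForm.box 0 (BForm.imp qV
      (BForm.dia 1 (BForm.and pV (BForm.and (BForm.neg qV)
        (BForm.and (BForm.box 0 (BForm.neg qV)) (BForm.dia 1 qV))))))) →
      ∀ y, F.R 0 x y → V 1 y →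
      ∃ z, F.R 1 y z ∧ V 0 z ∧ ¬ V 1 z ∧ (∀ v, F.R 0 z v → ¬ V 1 v) ∧
        ∃ u, F.R 1 z u ∧ V 1 u := by
    intro x hx y hy hq
    obtain ⟨z, hzR, hz2⟩ := (bdia_iff F V y 1 _).mp (hx y hy hq)
    obtain ⟨hp, hz3⟩ := (band_iff F V z _ _).mp hz2
    obtain ⟨hnq, hz4⟩ := (band_iff F V z _ _).mp hz3
    obtain ⟨hbox, hdia⟩ := (band_iff F V z _ _).mp hz4
    obtain ⟨u, huR, hqu⟩ := (bdia_iff F V z 1 _).mp hdia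
    exact ⟨z, hzR, hp, fun hq2 => hnq hq2, fun v hv hq2 => hbox v hv hq2, u, huR, hqu⟩
  have H3 : ∀ x, X x → ∀ y, F.R 0 x y → V 1 y →
      ∃ z, F.R 1 y z ∧ V 0 z ∧ ¬ V 1 z ∧ (∀ v, F.R 0 z v → ¬ V 1 v) ∧
        ∃ u, F.R 1 z u ∧ V 1 u := by
    rintro x (rfl | hx)
    · exact H3aux x h3w
    · exact H3aux x (h3b x hx)
  -- conjunct (4)
  have H4 : ∀ x, X x → ∀ y, F.R 0 x y → ∀ z, F.R 0 y z → V 0 z →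
      ∀ v, F.R 0 z v → ¬ V 0 v := by
    rintro x (rfl | hx) y hy z hz hp v hv hpv
    · exact h4w y hy z hz hp v hv hpv
    · exact h4b x hx y hy z hz hp v hv hpv
  -- the "good pair" predicate
  set Good : F.W → F.W → Prop := fun x b =>
    X x ∧ F.R 0 x b ∧ V 1 b ∧ ∀ v, F.R 1 b v → ¬ V 1 v with hGood
  -- step lemma
  have step : ∀ x b, Good x b → ∃ x2 b2 c, Good x2 b2 ∧
      F.R 1 b c ∧ F.R 1 c b ∧ V 0 c ∧ (∀ v, F.R 0 c v → ¬ V 0 v) ∧ F.R 0 b2 c := by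
    rintro x b ⟨hx, hxb, hQb, hb1⟩
    obtain ⟨c, hbc, hPc, hnQc, hc0, u, hcu, hQu⟩ := H3 x hx b hxb hQb
    have hcb : F.R 1 c b := by
      rcases hpt b c u hbc hcu with rfl | hbu
      · exact hcu
      · exact absurd hQu (hb1 u hbu)
    obtain ⟨y, hxy, hyc⟩ := hl x b c hxb hbc
    have hyX : X y := by
      rcases hx with rfl | hwx
      · exact Or.inr hxy
      · rcases hpt w x y hwx hxy with heq | hr
        · exact Or.inl heq.symm
        · exact Or.inr hr
    obtain ⟨b2, hyb2, hQb2, hb21⟩ := H2 y hyX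
    have hb2c : F.R 0 b2 c := by
      rcases hwc y b2 c hyb2 hyc with rfl | hr | hr
      · exact absurd hQb2 hnQc
      · exact hr
      · exact absurd hQb2 (hc0 b2 hr)
    have hcnp : ∀ v, F.R 0 c v → ¬ V 0 v := H4 y hyX b2 hyb2 c hb2c hPc
    exact ⟨y, b2, c, ⟨hyX, hyb2, hQb2, hb21⟩, hbc, hcb, hPc, hcnp, hb2c⟩
  -- base pair
  obtain ⟨b0, hwb0, hQb0, hb01⟩ := H2 w (Or.inl rfl)
  have good0 : Good w b0 := ⟨Or.inl rfl, hwb0, hQb0, hb01⟩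
  -- facts about a
  have hb0a : F.R 0 b0 a := by
    rcases hwc w a b0 hwa hwb0 with rfl | hr | hr
    · exact absurd hQb0 haQ
    · exact absurd hQb0 (ha0n b0 hr)
    · exact hr
  have hanp : ∀ v, F.R 0 a v → ¬ V 0 v := H4 w (Or.inl rfl) b0 hwb0 a hb0a hPa
  -- build the sequence
  have hstep : ∀ s : {p : F.W × F.W // Good p.1 p.2},
      ∃ (t : {p : F.W × F.W // Good p.1 p.2}) (c : F.W),
        F.R 1 s.1.2 c ∧ F.R 1 c s.1.2 ∧ V 0 c ∧
          (∀ v, F.R 0 c v → ¬ V 0 v) ∧ F.R 0 t.1.2 c := by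
    rintro ⟨⟨x, b⟩, hg⟩
    obtain ⟨x2, b2, c, hg2, hbc, hcb, hPc, hcnp, hb2c⟩ := step x b hg
    exact ⟨⟨(x2, b2), hg2⟩, c, hbc, hcb, hPc, hcnp, hb2c⟩
  choose next cfun Hbc Hcb HPc Hc0p Hnb using hstep
  set s : ℕ → {p : F.W × F.W // Good p.1 p.2} :=
    fun n => next^[n] ⟨(w, b0), good0⟩ with hs
  set b : ℕ → F.W := fun n => (s n).1.2 with hbdef
  set c : ℕ → F.W := fun n => cfun (s n) with hcdef
  have hsucc : ∀ n, s (n + 1) = next (s n) := fun n =>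
    Function.iterate_succ_apply' next n _
  have Bq : ∀ n, V 1 (b n) := fun n => (s n).2.2.2.1
  have Bb1 : ∀ n, ∀ v, F.R 1 (b n) v → ¬ V 1 v := fun n => (s n).2.2.2.2
  have Cbc : ∀ n, F.R 1 (b n) (c n) := fun n => Hbc (s n)
  have Ccb : ∀ n, F.R 1 (c n) (b n) := fun n => Hcb (s n)
  have CP : ∀ n, V 0 (c n) := fun n => HPc (s n)
  have Cnp : ∀ n, ∀ v, F.R 0 (c n) v → ¬ V 0 v := fun n => Hc0p (s n)
  have Bnc : ∀ n, F.R 0 (b (n + 1)) (c n) := by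
    intro n
    have heq : b (n + 1) = (next (s n)).1.2 := by
      rw [hbdef]; simp only; rw [hsucc n]
    rw [heq]
    exact Hnb (s n)
  have hb0eq : b 0 = b0 := rfl
  -- injectivity of b
  have key : ∀ n m, b n = b m → n < m → False := by
    intro n
    induction n with
    | zero =>
      intro m heq hlt
      obtain ⟨k, rfl⟩ : ∃ k, m = k + 1 := ⟨m - 1, by omega⟩
      have hrel : F.R 0 (b 0) (c k) := heq ▸ Bnc k
      have hb0a2 : F.R 0 (b 0) a := hb0eq ▸ hb0a
      rcases hwc (b 0) a (c k) hb0a2 hrel with heq2 | hr | hr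
      · exact ha1n (b k) (heq2 ▸ Ccb k) (Bq k)
      · exact hanp (c k) hr (CP k)
      · exact Cnp k a hr hPa
    | succ j ih =>
      intro m heq hlt
      obtain ⟨k, rfl⟩ : ∃ k, m = k + 1 := ⟨m - 1, by omega⟩
      have e1 : F.R 0 (b (j + 1)) (c j) := Bnc j
      have e2 : F.R 0 (b (j + 1)) (c k) := heq ▸ Bnc k
      rcases hwc (b (j + 1)) (c j) (c k) e1 e2 with heq2 | hr | hr
      · have hjk : F.R 1 (b j) (c k) := heq2 ▸ Cbc j
        rcases hpt (b j) (c k) (b k) hjk (Ccb k) with heq3 | hr2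
        · exact ih k heq3 (by omega)
        · exact Bb1 j (b k) hr2 (Bq k)
      · exact Cnp j (c k) hr (CP k)
      · exact Cnp k (c j) hr (CP j)
  have hinj : Function.Injective b := by
    intro n m hnm
    by_contra hne
    rcases Nat.lt_or_ge n m with hlt | hge
    · exact key n m hnm hlt
    · exact key m n hnm.symm (by omega)
  exact Infinite.of_injective b hinj
end

section
/- Let F be the 2-frame (W, ≤, W×W) where W = {x,y} with x ≠ y and ≤ = {(x,x),(x,y),(y,y)}. Then F is a p-morphic image of the product 2-frame (ω,≤) × (ω, ω×ω), i.e., there is a p-morphism from (ω,≤) × (ω, ω×ω) onto F. -/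
set_option linter.unusedVariables false

/-! ### p-morphisms -/

/-- A p-morphism from the 2-frame `F` onto the 2-frame `G`: a surjective map satisfying
the forth and back conditions for both relations. -/
def PMorphism (F G : Frame2) (f : F.W → G.W) : Prop :=
  Function.Surjective f ∧
  ∀ i : Fin 2,
    (∀ x y, F.R i x y → G.R i (f x) (f y)) ∧
    (∀ x v, G.R i (f x) v → ∃ y, F.R i x y ∧ f y = v)

/-- The frame `(ω, ω × ω)`: the natural numbers with the universal relation. -/
def omegaUniv : Frame1 := ⟨ℕ, ⟨0⟩, fun _ _ => True⟩

/-- The 2-frame `(W, ≤, W × W)` where `W = {x, y}` and `≤ = {(x,x), (x,y), (y,y)}`. -/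
def twoChainFrame (W : Type) (x y : W) : Frame2 :=
  ⟨W, ⟨x⟩, fun i a b =>
    if i = 0 then ((a = x ∧ b = x) ∨ (a = x ∧ b = y) ∨ (a = y ∧ b = y)) else True⟩

/-- The 2-frame `(W, ≤, W × W)` with `W = {x, y}` and `≤ = {(x,x), (x,y), (y,y)}` is a
p-morphic image of the product frame `(ω, ≤) × (ω, ω × ω)`. -/
theorem twoChainFrame_pmorphic_image (W : Type) (x y : W) (hxy : x ≠ y)
    (hW : ∀ w : W, w = x ∨ w = y) :
    ∃ f : (prodFrame omegaLe omegaUniv).W → (twoChainFrame W x y).W,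
      PMorphism (prodFrame omegaLe omegaUniv) (twoChainFrame W x y) f := by
  show ∃ f : ℕ × ℕ → W, Function.Surjective f ∧ ∀ i : Fin 2,
    (∀ a b : ℕ × ℕ, (prodFrame omegaLe omegaUniv).R i a b →
      (twoChainFrame W x y).R i (f a) (f b)) ∧
    (∀ (a : ℕ × ℕ) (v : W), (twoChainFrame W x y).R i (f a) v →
      ∃ b : ℕ × ℕ, (prodFrame omegaLe omegaUniv).R i a b ∧ f b = v)
  refine ⟨fun p => if p.1 < p.2 then x else y, ?_, ?_⟩
  · intro w
    rcases hW w with rfl | rfl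
    · exact ⟨(0, 1), by simp⟩
    · exact ⟨(0, 0), by simp⟩
  · intro i
    fin_cases i
    · constructor
      · rintro ⟨n, m⟩ ⟨n', m'⟩ hr
        obtain ⟨hle, heq⟩ : n ≤ n' ∧ m = m' := hr
        subst heq
        show ((if n < m then x else y) = x ∧ (if n' < m then x else y) = x) ∨ _ ∨ _
        by_cases h : n < m
        · by_cases h' : n' < m <;> simp [h, h']
        · have h2 : ¬ n' < m := fun hc => h (lt_of_le_of_lt hle hc)
          simp [h, h2]
      · rintro ⟨n, m⟩ v hv
        simp only [twoChainFrame, if_pos rfl] at hv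
        by_cases h : n < m
        · simp only [if_pos h] at hv
          rcases hv with ⟨_, hvx⟩ | ⟨_, hvy⟩ | ⟨hxy', _⟩
          · exact ⟨(n, m), ⟨le_refl n, rfl⟩, by simp only [if_pos h]; exact hvx.symm⟩
          · exact ⟨(m, m), ⟨le_of_lt h, rfl⟩, by simp only [if_neg (lt_irrefl m)]; exact hvy.symm⟩
          · exact absurd hxy' hxy
        · simp only [if_neg h] at hv
          rcases hv with ⟨hyx, _⟩ | ⟨hyx, _⟩ | ⟨_, hvy⟩
          · exact absurd hyx.symm hxy
          · exact absurd hyx.symm hxy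
          · exact ⟨(n, m), ⟨le_refl n, rfl⟩, by simp only [if_neg h]; exact hvy.symm⟩
    · constructor
      · intro a b _
        simp [twoChainFrame]
      · rintro ⟨n, m⟩ v hv
        rcases hW v with rfl | rfl
        · exact ⟨(n, n + 1), ⟨trivial, rfl⟩, by simp⟩
        · exact ⟨(n, n), ⟨trivial, rfl⟩, by simp⟩
end

section
/- Let F be the 2-frame (W, ≤, W×W) where W = {x,y} with x ≠ y and ≤ = {(x,x),(x,y),(y,y)}. Then F is not a p-morphic image of any finite product 2-frame, i.e., there is no p-morphism onto F from any product F0 × F1 of finite unimodal frames F0 and F1. -/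
set_option linter.unusedVariables false

/-- The 2-frame `(W, ≤, W × W)` with `W = {x, y}` and `≤ = {(x,x), (x,y), (y,y)}` is not
a p-morphic image of any product of two finite unimodal frames. -/
theorem twoChainFrame_not_finite_pmorphic_image (W : Type) (x y : W) (hxy : x ≠ y)
    (hW : ∀ w : W, w = x ∨ w = y) :
    ∀ (F0 F1 : Frame1), Finite F0.W → Finite F1.W →
      ∀ f : (prodFrame F0 F1).W → (twoChainFrame W x y).W,
        ¬ PMorphism (prodFrame F0 F1) (twoChainFrame W x y) f := by
  intro F0 F1 hF0 hF1 f hp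
  obtain ⟨hsurj, hpm⟩ := hp
  obtain ⟨forth0, back0⟩ := hpm 0
  obtain ⟨forth1, back1⟩ := hpm 1
  -- relations unfolded
  have hR0 : ∀ a b : F0.W × F1.W, (prodFrame F0 F1).R 0 a b ↔ F0.R a.1 b.1 ∧ a.2 = b.2 := by
    intro a b; simp [prodFrame]
  have hR1 : ∀ a b : F0.W × F1.W, (prodFrame F0 F1).R 1 a b ↔ F1.R a.2 b.2 ∧ a.1 = b.1 := by
    intro a b; simp [prodFrame]
  have hG0 : ∀ a b : W, (twoChainFrame W x y).R 0 a b ↔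
      ((a = x ∧ b = x) ∨ (a = x ∧ b = y) ∨ (a = y ∧ b = y)) := by
    intro a b; simp [twoChainFrame]
  have hG1 : ∀ a b : W, (twoChainFrame W x y).R 1 a b := by
    intro a b; simp [twoChainFrame]
  -- y only sees y along R0
  have hyonly : ∀ b : W, (twoChainFrame W x y).R 0 y b → b = y := by
    intro b hb
    rcases (hG0 y b).mp hb with ⟨h1, _⟩ | ⟨h1, _⟩ | ⟨_, h2⟩
    · exact absurd h1.symm hxy
    · exact absurd h1.symm hxy
    · exact h2
  -- step function
  have step : ∀ p : F0.W × F1.W, f p = x →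
      ∃ q : F0.W × F1.W, f q = x ∧ F0.R p.1 q.1 ∧ f (q.1, p.2) = y := by
    intro p hp
    have hx2y : (twoChainFrame W x y).R 0 (f p) y := by
      exact (hG0 _ _).mpr (Or.inr (Or.inl ⟨hp, rfl⟩))
    obtain ⟨u', hu', hfu'⟩ := back0 p y hx2y
    obtain ⟨hu1, hu2⟩ := (hR0 p u').mp hu'
    obtain ⟨q, hq, hfq⟩ := back1 u' x (hG1 _ _)
    obtain ⟨hq1, hq2⟩ := (hR1 u' q).mp hq
    refine ⟨q, hfq, ?_, ?_⟩
    · rw [← hq2]; exact hu1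
    · rw [← hq2, hu2]
      exact hfu'
  choose s hsx hsR hsy using step
  classical
  -- starting point
  obtain ⟨p0, hp0⟩ := hsurj x
  -- the sequence
  let g : ℕ → F0.W × F1.W := fun n => Nat.rec p0 (fun _ p => if h : f p = x then s p h else p) n
  have hg0 : g 0 = p0 := rfl
  have hgx : ∀ n, f (g n) = x := by
    intro n
    induction n with
    | zero => exact hp0
    | succ n ih =>
      show f (if h : f (g n) = x then s (g n) h else g n) = x
      have e : (if h : f (g n) = x then s (g n) h else g n) = s (g n) ih := dif_pos ih
      exact (congrArg f e).trans (hsx _ _)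
  have hgsucc : ∀ n, g (n + 1) = s (g n) (hgx n) := by
    intro n
    show (if h : f (g n) = x then s (g n) h else g n) = _
    rw [dif_pos (hgx n)]
  have hgy : ∀ n m, m < n → f ((g n).1, (g m).2) = y := by
    intro n
    induction n with
    | zero => intro m hm; omega
    | succ n ih =>
      intro m hm
      rcases Nat.lt_succ_iff_lt_or_eq.mp hm with hm' | hm'
      · have hy := ih m hm'
        have hR : (prodFrame F0 F1).R 0 ((g n).1, (g m).2) ((g (n+1)).1, (g m).2) := by
          rw [hR0]
          refine ⟨?_, rfl⟩
          show F0.R (g n).1 (g (n+1)).1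
          rw [hgsucc]
          exact hsR _ _
        have := forth0 _ _ hR
        rw [hy] at this
        exact hyonly _ this
      · subst hm'
        rw [hgsucc]
        exact hsy _ _
  -- injectivity of first coordinates
  have hinj : Function.Injective (fun n => (g n).1) := by
    intro m n hmn
    have hmn' : (g m).1 = (g n).1 := hmn
    by_contra h
    rcases Nat.lt_or_ge m n with hlt | hge
    · have h1 := hgy n m hlt
      have h2 := hgx m
      rw [← hmn'] at h1
      rw [show ((g m).1, (g m).2) = g m from rfl] at h1
      exact hxy (h2 ▸ h1 ▸ rfl)
    · have hlt : n < m := lt_of_le_of_ne hge (Ne.symm h)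
      have h1 := hgy m n hlt
      have h2 := hgx n
      rw [hmn'] at h1
      rw [show ((g n).1, (g n).2) = g n from rfl] at h1
      exact hxy (h2 ▸ h1 ▸ rfl)
  haveI := Finite.of_injective _ hinj
  exact not_finite ℕ
end
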